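/- If b ≥ a, then the Kummer function z ↦ M(a,b,z) has no zeros on the negative real axis; equivalently, M(a,b,z) > 0 for all z < 0 when b ≥ a and b > 0. -/

import Mathlib

open MeasureTheory Real Set

noncomputable section

/-- The Kummer confluent hypergeometric function `M(a,b,z)`. -/
def kummerM (a b z : ℝ) : ℝ :=
  ∑' k : ℕ, ((ascPochhammer ℝ k).eval a / ((ascPochhammer ℝ k).eval b * (Nat.factorial k))) * z ^ k

/-- The `k`-th term of the Kummer series. -/
def kterm (a b z : ℝ) (k : ℕ) : ℝ :=
  ((ascPochhammer ℝ k).eval a / ((ascPochhammer ℝ k).eval b * (Nat.factorial k))) * z ^ k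

lemma kummerM_eq_tsum_kterm (a b z : ℝ) : kummerM a b z = ∑' k, kterm a b z k := rfl

lemma poch_succ_left (n : ℕ) (x : ℝ) :
    (ascPochhammer ℝ (n+1)).eval x = x * (ascPochhammer ℝ n).eval (x+1) := by
  induction n with
  | zero => simp [ascPochhammer_succ_eval]
  | succ n ih => rw [ascPochhammer_succ_eval, ih, ascPochhammer_succ_eval]; push_cast; ring

lemma poch_nonneg {c : ℝ} (hc : 0 ≤ c) (n : ℕ) : 0 ≤ (ascPochhammer ℝ n).eval c := by
  induction n with
  | zero => simp
  | succ n ih =>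
      rw [ascPochhammer_succ_eval]
      exact mul_nonneg ih (by positivity)

lemma kterm_succ (a b z : ℝ) (hb : 0 < b) (k : ℕ) :
    kterm a b z (k+1) = kterm a b z k * ((a + k) * z / ((b + k) * (k+1))) := by
  have hbk : (0:ℝ) < (ascPochhammer ℝ k).eval b := ascPochhammer_pos k b hb
  have hfk : (0:ℝ) < (Nat.factorial k : ℝ) := by positivity
  have hbk2 : (0:ℝ) < b + k := by positivity
  simp only [kterm, ascPochhammer_succ_eval, Nat.factorial_succ, pow_succ]
  push_cast
  field_simp

lemma kterm_summable_norm (a b z : ℝ) (hb : 0 < b) :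
    Summable fun k => ‖kterm a b z k‖ := by
  apply summable_of_ratio_norm_eventually_le (r := 1/2) (by norm_num)
  have h1 := Filter.eventually_ge_atTop ⌈|a|⌉₊
  have h2 := Filter.eventually_ge_atTop ⌈4*|z|⌉₊
  filter_upwards [h1, h2] with k hk1 hk2
  have hka : |a| ≤ (k:ℝ) := le_trans (Nat.le_ceil _) (by exact_mod_cast hk1)
  have hkz : 4*|z| ≤ (k:ℝ) := le_trans (Nat.le_ceil _) (by exact_mod_cast hk2)
  have hbk : (0:ℝ) < b + k := by positivity
  have hk1' : (0:ℝ) < (k:ℝ)+1 := by positivity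
  simp only [norm_norm]
  rw [kterm_succ a b z hb k, norm_mul, mul_comm (1/2 : ℝ)]
  apply mul_le_mul_of_nonneg_left _ (norm_nonneg _)
  rw [Real.norm_eq_abs, abs_div, abs_mul, abs_mul]
  rw [abs_of_pos hbk, abs_of_pos hk1']
  rw [div_le_iff₀ (by positivity)]
  have hab : |a + (k:ℝ)| ≤ 2*((k:ℝ)+1) := by
    calc |a + (k:ℝ)| ≤ |a| + (k:ℝ) := by
          refine (abs_add_le _ _).trans ?_
          simp [abs_of_nonneg (show (0:ℝ) ≤ (k:ℝ) by positivity)]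
      _ ≤ (k:ℝ) + (k:ℝ) := by linarith
      _ ≤ 2*((k:ℝ)+1) := by linarith
  calc |a + (k:ℝ)| * |z| ≤ (2*((k:ℝ)+1)) * |z| := by
        exact mul_le_mul_of_nonneg_right hab (abs_nonneg _)
    _ ≤ 1/2 * ((b + k) * ((k:ℝ)+1)) := by nlinarith [abs_nonneg z]

lemma kterm_summable (a b z : ℝ) (hb : 0 < b) : Summable (kterm a b z) :=
  (kterm_summable_norm a b z hb).of_norm

lemma chu_vandermonde : ∀ (n : ℕ) (b : ℝ), 0 < b → ∀ c : ℝ,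
    ∑ j ∈ Finset.range (n+1), (-1:ℝ)^j * (n.choose j) *
      ((ascPochhammer ℝ j).eval c / (ascPochhammer ℝ j).eval b)
    = (ascPochhammer ℝ n).eval (b - c) / (ascPochhammer ℝ n).eval b := by
  intro n
  induction n with
  | zero => intro b hb c; simp
  | succ n ih =>
      intro b hb c
      have hb1 : (0:ℝ) < b + 1 := by linarith
      have hp : (0:ℝ) < (ascPochhammer ℝ n).eval b := ascPochhammer_pos n b hb
      have hq : (0:ℝ) < (ascPochhammer ℝ n).eval (b+1) := ascPochhammer_pos n (b+1) hb1
      have hbn : (0:ℝ) < b + n := by positivity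
      set Q : ℕ → ℝ := fun j => (ascPochhammer ℝ j).eval c / (ascPochhammer ℝ j).eval b with hQ
      rw [Finset.sum_range_succ']
      have hsplit : ∀ i ∈ Finset.range (n+1),
          (-1:ℝ)^(i+1) * ((n+1).choose (i+1)) * Q (i+1)
          = (-1:ℝ)^(i+1) * (n.choose (i+1)) * Q (i+1)
            + (-(c / b)) * ((-1:ℝ)^i * (n.choose i) *
              ((ascPochhammer ℝ i).eval (c+1) / (ascPochhammer ℝ i).eval (b+1))) := by
        intro i _
        have hQ1 : Q (i+1) = (c/b) *
            ((ascPochhammer ℝ i).eval (c+1) / (ascPochhammer ℝ i).eval (b+1)) := by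
          rw [hQ]; simp only
          rw [poch_succ_left, poch_succ_left, mul_div_mul_comm]
        rw [Nat.choose_succ_succ, hQ1]
        push_cast
        ring
      rw [Finset.sum_congr rfl hsplit, Finset.sum_add_distrib, ← Finset.mul_sum,
        ih (b+1) hb1 (c+1)]
      have hlast : ∑ i ∈ Finset.range (n+1), (-1:ℝ)^(i+1) * (n.choose (i+1)) * Q (i+1)
          + (-1:ℝ)^0 * ((n+1).choose 0) * Q 0
          = ∑ j ∈ Finset.range (n+1), (-1:ℝ)^j * (n.choose j) * Q j := by
        have : ∑ j ∈ Finset.range (n+2), (-1:ℝ)^j * (n.choose j) * Q j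
            = ∑ i ∈ Finset.range (n+1), (-1:ℝ)^(i+1) * (n.choose (i+1)) * Q (i+1)
              + (-1:ℝ)^0 * (n.choose 0) * Q 0 := Finset.sum_range_succ' _ _
        rw [show ((n+1).choose 0 : ℝ) = ((n.choose 0 : ℕ) : ℝ) by norm_num]
        rw [← this, Finset.sum_range_succ, Nat.choose_succ_self]
        simp
      rw [add_right_comm, hlast, ih b hb c]
      have key : b * (ascPochhammer ℝ n).eval (b+1)
          = (ascPochhammer ℝ n).eval b * (b + n) := by
        have h1 := poch_succ_left n b
        have h2 := ascPochhammer_succ_eval n b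
        rw [h2] at h1; linarith [h1]
      rw [ascPochhammer_succ_eval n (b - c), ascPochhammer_succ_eval n b]
      have hc1 : (b + 1) - (c + 1) = b - c := by ring
      rw [hc1]
      have e1 : -(c / b) * ((ascPochhammer ℝ n).eval (b-c) / (ascPochhammer ℝ n).eval (b+1))
          = -(c * (ascPochhammer ℝ n).eval (b-c) / ((ascPochhammer ℝ n).eval b * (b + n))) := by
        rw [neg_mul, div_mul_div_comm, ← key, mul_comm b]
      rw [e1]
      field_simp
      ring

lemma exp_summable_norm (z : ℝ) : Summable fun n : ℕ => ‖z ^ n / (n.factorial : ℝ)‖ := by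
  have h := Real.summable_pow_div_factorial |z|
  refine h.congr fun n => ?_
  rw [norm_div, norm_pow, Real.norm_eq_abs, Real.norm_natCast]

lemma inner_sum_eq (a b z : ℝ) (hb : 0 < b) (n : ℕ) :
    ∑ kl ∈ Finset.HasAntidiagonal.antidiagonal n, (z ^ kl.1 / (kl.1.factorial : ℝ)) * kterm (b - a) b (-z) kl.2
      = kterm a b z n := by
  set c := b - a with hc
  rw [Finset.Nat.sum_antidiagonal_eq_sum_range_succ
    (fun i j => (z ^ i / (i.factorial : ℝ)) * kterm c b (-z) j) n]
  have hreflect := Finset.sum_range_reflect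
    (fun j => z ^ (n - j) / ((n - j).factorial : ℝ) * kterm c b (-z) j) (n+1)
  simp only [Nat.add_sub_cancel] at hreflect
  have hswap : ∑ k ∈ Finset.range (n+1), z ^ k / (k.factorial : ℝ) * kterm c b (-z) (n - k)
      = ∑ j ∈ Finset.range (n+1), z ^ (n - j) / ((n - j).factorial : ℝ) * kterm c b (-z) j := by
    rw [← hreflect]
    refine Finset.sum_congr rfl fun k hk => ?_
    have hkn : k ≤ n := Nat.lt_succ_iff.mp (Finset.mem_range.mp hk)
    rw [Nat.sub_sub_self hkn]
  rw [hswap]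
  have hterm : ∀ j ∈ Finset.range (n+1),
      z ^ (n - j) / ((n - j).factorial : ℝ) * kterm c b (-z) j
      = (z ^ n / (n.factorial : ℝ)) * ((-1:ℝ)^j * (n.choose j) *
          ((ascPochhammer ℝ j).eval c / (ascPochhammer ℝ j).eval b)) := by
    intro j hj
    have hjn : j ≤ n := Nat.lt_succ_iff.mp (Finset.mem_range.mp hj)
    have hbj : (0:ℝ) < (ascPochhammer ℝ j).eval b := ascPochhammer_pos j b hb
    have hchoose : ((n.choose j : ℕ) : ℝ) * (j.factorial : ℝ) * ((n - j).factorial : ℝ)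
        = (n.factorial : ℝ) := by
      exact_mod_cast congrArg (Nat.cast : ℕ → ℝ)
        (Nat.choose_mul_factorial_mul_factorial hjn)
    have hz : z ^ (n - j) * z ^ j = z ^ n := by
      rw [← pow_add, Nat.sub_add_cancel hjn]
    have hnegz : (-z) ^ j = (-1:ℝ)^j * z ^ j := by
      rw [neg_pow]
    have hch : (0:ℝ) < ((n.choose j : ℕ) : ℝ) := by exact_mod_cast Nat.choose_pos hjn
    have hfj : (0:ℝ) < (j.factorial : ℝ) := by positivity
    have hfnj : (0:ℝ) < ((n - j).factorial : ℝ) := by positivity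
    rw [kterm, hnegz, ← hz, ← hchoose]
    field_simp
  rw [Finset.sum_congr rfl hterm, ← Finset.mul_sum, chu_vandermonde n b hb c]
  have hbc : b - c = a := by rw [hc]; ring
  rw [hbc, kterm]
  have hbn : (0:ℝ) < (ascPochhammer ℝ n).eval b := ascPochhammer_pos n b hb
  have hfn : (0:ℝ) < (n.factorial : ℝ) := by positivity
  field_simp

/-- Kummer's transformation `M(a,b,z) = e^z · M(b-a,b,-z)`. -/
lemma kummer_transform (a b z : ℝ) (hb : 0 < b) :
    kummerM a b z = Real.exp z * kummerM (b - a) b (-z) := by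
  rw [kummerM_eq_tsum_kterm, kummerM_eq_tsum_kterm]
  rw [Real.exp_eq_exp_ℝ, NormedSpace.exp_eq_tsum_div]
  rw [tsum_mul_tsum_eq_tsum_sum_antidiagonal_of_summable_norm
    (exp_summable_norm z) (kterm_summable_norm (b-a) b (-z) hb)]
  exact (tsum_congr (inner_sum_eq a b z hb)).symm

/-- if `b ≥ a` and `b > 0`, then `M(a,b,z) > 0` for all `z < 0`;
in particular `M(a,b,·)` has no zeros on the negative real axis. -/
theorem stmt10 (a b : ℝ) (hb : 0 < b) (hab : a ≤ b) :
    ∀ z : ℝ, z < 0 → 0 < kummerM a b z := by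
  intro z hz
  rw [kummer_transform a b z hb]
  have hc : (0:ℝ) ≤ b - a := by linarith
  have hw : (0:ℝ) < -z := by linarith
  have hpos : ∀ j, 0 ≤ kterm (b - a) b (-z) j := by
    intro j
    have h1 : 0 ≤ (ascPochhammer ℝ j).eval (b - a) := poch_nonneg hc j
    have h2 : (0:ℝ) < (ascPochhammer ℝ j).eval b := ascPochhammer_pos j b hb
    have h3 : (0:ℝ) ≤ (-z) ^ j := by positivity
    have h4 : (0:ℝ) < (j.factorial : ℝ) := by positivity
    exact mul_nonneg (div_nonneg h1 (by positivity)) h3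
  have h0 : (1:ℝ) ≤ kummerM (b - a) b (-z) := by
    rw [kummerM_eq_tsum_kterm]
    have hle := Summable.sum_le_tsum ({0} : Finset ℕ) (fun i _ => hpos i)
      (kterm_summable (b - a) b (-z) hb)
    simpa [kterm] using hle
  have := Real.exp_pos z
  nlinarith
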